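/- In a directed graph consisting of a start node s with edges s→t1, t1→t2, t2→t3, t3→g, and t1→t4, t4→t5, t5→g (all edges of cost 1, visibility being the identity function), every tuple (D, s, g, t_i) for i ∈ {1,...,5} is a (3, 1, ∞)-Anonymizable Tuple, but no single path planner can return a (3, 1, ∞)-Anonymized Path for all five transit candidates simultaneously. -/

import Mathlib

open scoped ENNReal

structure Domain (N : Type*) where
  E : N → N → Prop
  T : Set N
  c : N → N → ℝ
  c_nonneg : ∀ a b, 0 ≤ c a b
  v : N → Set N

variable {N : Type*}

/-- A path is a nonempty sequence of nodes where consecutive nodes are joined by edges. -/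
def IsPath (D : Domain N) (π : List N) : Prop :=
  π ≠ [] ∧ π.Chain' D.E

def startsAt (π : List N) (a : N) : Prop := π.head? = some a

def endsAt (π : List N) (b : N) : Prop := π.getLast? = some b

/-- A path covers a node `n` if some node on the path sees `n`. -/
def Covers (D : Domain N) (π : List N) (n : N) : Prop :=
  ∃ x ∈ π, n ∈ D.v x

/-- The cost of a path: the sum of the costs of its consecutive edges. -/
def cost (D : Domain N) : List N → ℝ
  | [] => 0
  | [_] => 0
  | a :: b :: rest => D.c a b + cost D (b :: rest)

/-- Shortest-path distance (`∞` if there is no path). -/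
noncomputable def spDist (D : Domain N) (a b : N) : ℝ≥0∞ :=
  ⨅ (π : List N) (_ : IsPath D π ∧ startsAt π a ∧ endsAt π b),
    ENNReal.ofReal (cost D π)

/-- A path planner maps (domain, start, goal, transit point) to a path or Failure (`none`). -/
abbrev Planner (N : Type*) := Domain N → N → N → N → Option (List N)

/-- A feasible solution to a PPVT: a path from `s` to `g` covering `t`. -/
def Feasible (D : Domain N) (s g t : N) (π : List N) : Prop :=
  IsPath D π ∧ startsAt π s ∧ endsAt π g ∧ Covers D π t

/-- A planner is sound if any returned path is a feasible PPVT solution. -/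
def SoundPlanner (D : Domain N) (A : Planner N) : Prop :=
  ∀ s g t π, A D s g t = some π → Feasible D s g t π

/-- The prefix `π|_m` consisting of the first `m` nodes (the whole path if `m = ∞`
or `m` exceeds the length). -/
def takeE (m : ℕ∞) (π : List N) : List N :=
  if m = ⊤ then π else π.take m.toNat

/-- `A (D, s, g, t)` is a `(k, ℓ, m)`-Anonymized Path: there is a set `S` of at least `k`
transit candidates, pairwise shortest-path distance `≥ ℓ`, whose planner outputs all agree
with the output for `t` on the first `m` nodes. -/
def IsAnonymized (D : Domain N) (A : Planner N) (s g t : N)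
    (k : ℕ) (ℓ : ℝ) (m : ℕ∞) : Prop :=
  ∃ (π : List N) (S : Finset N), A D s g t = some π ∧ ↑S ⊆ D.T ∧
    k ≤ S.card ∧
    (∀ i ∈ S, ∀ j ∈ S, i ≠ j → ENNReal.ofReal ℓ ≤ spDist D i j) ∧
    (∀ t' ∈ S, ∃ π', A D s g t' = some π' ∧ takeE m π' = takeE m π)

/-- `(D, s, g, t)` is a `(k, ℓ, m)`-Anonymizable Tuple: some sound planner outputs a
`(k, ℓ, m)`-Anonymized Path for it. -/
def IsAnonymizableTuple (D : Domain N) (s g t : N) (k : ℕ) (ℓ : ℝ) (m : ℕ∞) : Prop :=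
  t ∈ D.T ∧ s ≠ t ∧ g ≠ t ∧
    ∃ A : Planner N, SoundPlanner D A ∧ IsAnonymized D A s g t k ℓ m

/-- A planner satisfies `(k, ℓ, m)`-Anonymity for `D` if it returns a `(k, ℓ, m)`-Anonymized
Path for every `(k, ℓ, m)`-Anonymizable Tuple in `D`. -/
def SatisfiesAnonymity (D : Domain N) (A : Planner N) (k : ℕ) (ℓ : ℝ) (m : ℕ∞) : Prop :=
  ∀ s g t, IsAnonymizableTuple D s g t k ℓ m → IsAnonymized D A s g t k ℓ m

def Undirected (D : Domain N) : Prop := ∀ i j, D.E i j → D.E j i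

/-- Concatenation of two paths sharing an endpoint (the shared node appears once). -/
def concatP (πa πb : List N) : List N := πa ++ πb.tail

inductive V where
  | s | t1 | t2 | t3 | t4 | t5 | g
deriving DecidableEq

open V in
def D3 : Domain V where
  E a b := (a = s ∧ b = t1) ∨ (a = t1 ∧ b = t2) ∨ (a = t2 ∧ b = t3) ∨
    (a = t3 ∧ b = g) ∨ (a = t1 ∧ b = t4) ∨ (a = t4 ∧ b = t5) ∨ (a = t5 ∧ b = g)
  T := {t1, t2, t3, t4, t5}
  c _ _ := 1
  c_nonneg _ _ := zero_le_one
  v n := {n}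


open V

/-- The two s-to-g paths. -/
def piA : List V := [s, t1, t2, t3, g]
def piB : List V := [s, t1, t4, t5, g]

lemma cost_nonneg (D : Domain N) : ∀ π : List N, 0 ≤ cost D π
  | [] => le_refl 0
  | [_] => le_refl 0
  | a :: b :: rest => add_nonneg (D.c_nonneg a b) (cost_nonneg D (b :: rest))

lemma one_le_spDist {i j : V} (h : i ≠ j) : ENNReal.ofReal 1 ≤ spDist D3 i j := by
  refine le_iInf fun π => le_iInf fun hπ => ?_
  obtain ⟨⟨hne, _⟩, hs, he⟩ := hπ
  match π with
  | [] => exact absurd rfl hne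
  | [x] =>
    simp only [startsAt, endsAt, List.head?, List.getLast?, Option.some.injEq] at hs he
    exact absurd (hs ▸ he ▸ rfl) h
  | a :: b :: rest =>
    apply ENNReal.ofReal_le_ofReal
    have := cost_nonneg D3 (b :: rest)
    show (1 : ℝ) ≤ cost D3 (a :: b :: rest)
    rw [show cost D3 (a :: b :: rest) = 1 + cost D3 (b :: rest) from rfl]
    linarith

/-- classification of s-to-g paths in D3 -/
lemma path_cases (π : List V) (hp : IsPath D3 π) (hs : startsAt π s)
    (he : endsAt π g) : π = piA ∨ π = piB := by
  obtain ⟨hne, hch⟩ := hp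
  match π with
  | [] => exact absurd rfl hne
  | a :: l =>
    simp only [startsAt, List.head?, Option.some.injEq] at hs
    subst hs
    match l with
    | [] => simp [endsAt, List.getLast?] at he
    | b :: l =>
      simp only [List.Chain', List.isChain_cons_cons] at hch
      obtain ⟨hab, hch⟩ := hch
      have hb : b = t1 := by simp [D3] at hab; tauto
      subst hb
      match l with
      | [] => simp [endsAt] at he
      | c :: l =>
        rw [List.isChain_cons_cons] at hch
        obtain ⟨hbc, hch⟩ := hch
        have hc : c = t2 ∨ c = t4 := by simp [D3] at hbc; tauto
        rcases hc with hc | hc <;> subst hc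
        · match l with
          | [] => simp [endsAt] at he
          | d :: l =>
            rw [List.isChain_cons_cons] at hch
            obtain ⟨hcd, hch⟩ := hch
            have hd : d = t3 := by simp [D3] at hcd; tauto
            subst hd
            match l with
            | [] => simp [endsAt] at he
            | e :: l =>
              rw [List.isChain_cons_cons] at hch
              obtain ⟨hde, hch⟩ := hch
              have hd : e = g := by simp [D3] at hde; tauto
              subst hd
              match l with
              | [] => left; rfl
              | f :: l =>
                rw [List.isChain_cons_cons] at hch
                obtain ⟨hgf, _⟩ := hch
                simp [D3] at hgf
        · match l with
          | [] => simp [endsAt] at he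
          | d :: l =>
            rw [List.isChain_cons_cons] at hch
            obtain ⟨hcd, hch⟩ := hch
            have hd : d = t5 := by simp [D3] at hcd; tauto
            subst hd
            match l with
            | [] => simp [endsAt] at he
            | e :: l =>
              rw [List.isChain_cons_cons] at hch
              obtain ⟨hde, hch⟩ := hch
              have hd : e = g := by simp [D3] at hde; tauto
              subst hd
              match l with
              | [] => right; rfl
              | f :: l =>
                rw [List.isChain_cons_cons] at hch
                obtain ⟨hgf, _⟩ := hch
                simp [D3] at hgf

lemma feasA {t : V} (ht : t ∈ piA) : Feasible D3 s g t piA := by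
  refine ⟨⟨by simp [piA], ?_⟩, by simp [startsAt, piA], by simp [endsAt, piA], t, ht, rfl⟩
  simp [piA, List.Chain', List.isChain_cons_cons, D3]

lemma feasB {t : V} (ht : t ∈ piB) : Feasible D3 s g t piB := by
  refine ⟨⟨by simp [piB], ?_⟩, by simp [startsAt, piB], by simp [endsAt, piB], t, ht, rfl⟩
  simp [piB, List.Chain', List.isChain_cons_cons, D3]

/-- planner preferring piA -/
def plan1 : Planner V := fun _ a b t =>
  if a = s ∧ b = g then
    match t with
    | t1 | t2 | t3 => some piA
    | t4 | t5 => some piB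
    | _ => none
  else none

/-- planner preferring piB -/
def plan2 : Planner V := fun _ a b t =>
  if a = s ∧ b = g then
    match t with
    | t1 | t4 | t5 => some piB
    | t2 | t3 => some piA
    | _ => none
  else none

lemma sound1 : SoundPlanner D3 plan1 := by
  intro a b t π h
  unfold plan1 at h
  split at h
  · next hab =>
    obtain ⟨rfl, rfl⟩ := hab
    cases t <;> simp at h <;> subst h
    · exact feasA (by simp [piA])
    · exact feasA (by simp [piA])
    · exact feasA (by simp [piA])
    · exact feasB (by simp [piB])
    · exact feasB (by simp [piB])
  · exact absurd h (by simp)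

lemma sound2 : SoundPlanner D3 plan2 := by
  intro a b t π h
  unfold plan2 at h
  split at h
  · next hab =>
    obtain ⟨rfl, rfl⟩ := hab
    cases t <;> simp at h <;> subst h
    · exact feasB (by simp [piB])
    · exact feasA (by simp [piA])
    · exact feasA (by simp [piA])
    · exact feasB (by simp [piB])
    · exact feasB (by simp [piB])
  · exact absurd h (by simp)

lemma pairwise_dist (S : Finset V) :
    ∀ i ∈ S, ∀ j ∈ S, i ≠ j → ENNReal.ofReal 1 ≤ spDist D3 i j :=
  fun _ _ _ _ h => one_le_spDist h

lemma anon1 {t : V} (ht : t = t1 ∨ t = t2 ∨ t = t3) :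
    IsAnonymized D3 plan1 s g t 3 1 ⊤ := by
  refine ⟨piA, {t1, t2, t3}, ?_, ?_, ?_, pairwise_dist _, ?_⟩
  · rcases ht with rfl | rfl | rfl <;> simp [plan1]
  · intro x hx; simp at hx; rcases hx with rfl | rfl | rfl <;> simp [D3]
  · decide
  · intro t' ht'
    fin_cases ht' <;> exact ⟨piA, by simp [plan1], rfl⟩

lemma anon2 {t : V} (ht : t = t1 ∨ t = t4 ∨ t = t5) :
    IsAnonymized D3 plan2 s g t 3 1 ⊤ := by
  refine ⟨piB, {t1, t4, t5}, ?_, ?_, ?_, pairwise_dist _, ?_⟩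
  · rcases ht with rfl | rfl | rfl <;> simp [plan2]
  · intro x hx; simp at hx; rcases hx with rfl | rfl | rfl <;> simp [D3]
  · decide
  · intro t' ht'
    fin_cases ht' <;> exact ⟨piB, by simp [plan2], rfl⟩

open V in
/-- in the directed counterexample graph, every tuple is
`(3, 1, ∞)`-Anonymizable, but no single (sound) planner returns a `(3, 1, ∞)`-Anonymized
Path for all five transit candidates simultaneously. -/
theorem stmt3 :
    (∀ t ∈ D3.T, IsAnonymizableTuple D3 s g t 3 1 ⊤) ∧
    ¬ ∃ A : Planner V, SoundPlanner D3 A ∧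
        ∀ t ∈ D3.T, IsAnonymized D3 A s g t 3 1 ⊤ := by
  constructor
  · intro t ht
    simp only [D3, Set.mem_insert_iff, Set.mem_singleton_iff] at ht
    rcases ht with rfl | rfl | rfl | rfl | rfl
    · exact ⟨by simp [D3], by simp, by simp, plan1, sound1, anon1 (Or.inl rfl)⟩
    · exact ⟨by simp [D3], by simp, by simp, plan1, sound1, anon1 (Or.inr (Or.inl rfl))⟩
    · exact ⟨by simp [D3], by simp, by simp, plan1, sound1, anon1 (Or.inr (Or.inr rfl))⟩
    · exact ⟨by simp [D3], by simp, by simp, plan2, sound2, anon2 (Or.inr (Or.inl rfl))⟩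
    · exact ⟨by simp [D3], by simp, by simp, plan2, sound2, anon2 (Or.inr (Or.inr rfl))⟩
  · rintro ⟨A, hA, hall⟩
    -- from t2
    obtain ⟨π2, S2, hout2, hS2T, hcard2, -, hsame2⟩ := hall t2 (by simp [D3])
    obtain ⟨π4, S4, hout4, hS4T, hcard4, -, hsame4⟩ := hall t4 (by simp [D3])
    have hfeas2 := hA _ _ _ _ hout2
    have hfeas4 := hA _ _ _ _ hout4
    have hcov2 : t2 ∈ π2 := by
      obtain ⟨-, -, -, x, hx, hv⟩ := hfeas2
      simp only [D3, Set.mem_singleton_iff] at hv; exact hv ▸ hx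
    have hcov4 : t4 ∈ π4 := by
      obtain ⟨-, -, -, x, hx, hv⟩ := hfeas4
      simp only [D3, Set.mem_singleton_iff] at hv; exact hv ▸ hx
    have hπ2 : π2 = piA := by
      rcases path_cases π2 hfeas2.1 hfeas2.2.1 hfeas2.2.2.1 with h | h
      · exact h
      · rw [h] at hcov2; simp [piB] at hcov2
    have hπ4 : π4 = piB := by
      rcases path_cases π4 hfeas4.1 hfeas4.2.1 hfeas4.2.2.1 with h | h
      · rw [h] at hcov4; simp [piA] at hcov4
      · exact h
    -- every member of S2 outputs piA, so covered by piA; S2 ⊆ {t1,t2,t3}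
    have hS2sub : S2 ⊆ ({t1, t2, t3} : Finset V) := by
      intro x hx
      obtain ⟨π', hπ', heq⟩ := hsame2 x hx
      simp [takeE] at heq
      have hfeas := hA _ _ _ _ hπ'
      have hcov : x ∈ π' := by
        obtain ⟨-, -, -, y, hy, hv⟩ := hfeas
        simp only [D3, Set.mem_singleton_iff] at hv; exact hv ▸ hy
      rw [heq, hπ2] at hcov
      have hxT := hS2T hx
      simp only [D3, Set.mem_insert_iff, Set.mem_singleton_iff] at hxT
      simp only [piA, List.mem_cons, List.not_mem_nil, or_false] at hcov
      simp only [Finset.mem_insert, Finset.mem_singleton]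
      rcases hxT with rfl | rfl | rfl | rfl | rfl <;> tauto
    have hS4sub : S4 ⊆ ({t1, t4, t5} : Finset V) := by
      intro x hx
      obtain ⟨π', hπ', heq⟩ := hsame4 x hx
      simp [takeE] at heq
      have hfeas := hA _ _ _ _ hπ'
      have hcov : x ∈ π' := by
        obtain ⟨-, -, -, y, hy, hv⟩ := hfeas
        simp only [D3, Set.mem_singleton_iff] at hv; exact hv ▸ hy
      rw [heq, hπ4] at hcov
      have hxT := hS4T hx
      simp only [D3, Set.mem_insert_iff, Set.mem_singleton_iff] at hxT
      simp only [piB, List.mem_cons, List.not_mem_nil, or_false] at hcov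
      simp only [Finset.mem_insert, Finset.mem_singleton]
      rcases hxT with rfl | rfl | rfl | rfl | rfl <;> tauto
    have hS2eq : S2 = ({t1, t2, t3} : Finset V) :=
      Finset.eq_of_subset_of_card_le hS2sub (by simpa using hcard2)
    have hS4eq : S4 = ({t1, t4, t5} : Finset V) :=
      Finset.eq_of_subset_of_card_le hS4sub (by simpa using hcard4)
    have h1A : A D3 s g t1 = some piA := by
      obtain ⟨π', hπ', heq⟩ := hsame2 t1 (by rw [hS2eq]; decide)
      simp [takeE] at heq
      rw [hπ', heq, hπ2]
    have h1B : A D3 s g t1 = some piB := by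
      obtain ⟨π', hπ', heq⟩ := hsame4 t1 (by rw [hS4eq]; decide)
      simp [takeE] at heq
      rw [hπ', heq, hπ4]
    rw [h1A] at h1B
    simp [piA, piB] at h1B
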